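/- Every strip is foliated homeomorphic to a model strip. That is, for every strip S there exist a model strip S' and a homeomorphism φ : S → S' mapping leaves of the canonical foliation of S onto leaves of the canonical foliation of S'. -/

import Mathlib

open Set

/-- A strip: ℝ×(u,v) ⊆ S ⊆ ℝ×[u,v], open in ℝ×[u,v]. -/
def IsStrip (S : Set (ℝ × ℝ)) (u v : ℝ) : Prop :=
  u < v ∧ (univ ×ˢ Ioo u v) ⊆ S ∧ S ⊆ univ ×ˢ Icc u v ∧
  ∃ U : Set (ℝ × ℝ), IsOpen U ∧ S = U ∩ (univ ×ˢ Icc u v)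

/-- The boundary ∂S of a strip. -/
def stripBd (S : Set (ℝ × ℝ)) (u v : ℝ) : Set (ℝ × ℝ) :=
  S ∩ {p | p.2 = u ∨ p.2 = v}

/-- The partial order on the boundary of a strip: (a,x) < (b,y) iff a < b and x = y. -/
def bdLt (p q : ℝ × ℝ) : Prop := p.1 < q.1 ∧ p.2 = q.2

/-- Leaves of the canonical foliation of a subset A of the plane: connected
components of the horizontal sections of A.  For a strip these are exactly the
horizontal lines ℝ×{t}, t ∈ (u,v), together with the boundary intervals. -/
def IsLeaf (A L : Set (ℝ × ℝ)) : Prop :=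
  ∃ p ∈ A, L = connectedComponentIn ({q : ℝ × ℝ | q.2 = p.2} ∩ A) p

/-- A foliated homeomorphism of A onto B: a homeomorphism (in the subspace
topologies) mapping each leaf of the canonical foliation of A onto a leaf of the
canonical foliation of B. -/
def FoliatedHomeo (A B : Set (ℝ × ℝ)) (F : ℝ × ℝ → ℝ × ℝ) : Prop :=
  BijOn F A B ∧ ContinuousOn F A ∧
  (∃ G : ℝ × ℝ → ℝ × ℝ, InvOn G F A B ∧ ContinuousOn G B) ∧
  ∀ L, IsLeaf A L → IsLeaf B (F '' L)

/-- A model strip: a strip whose boundary intervals (connected components of the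
boundary) are bounded and have pairwise disjoint closures. -/
def IsModelStrip (S : Set (ℝ × ℝ)) (u v : ℝ) : Prop :=
  IsStrip S u v ∧
  (∀ p ∈ stripBd S u v, Bornology.IsBounded (connectedComponentIn (stripBd S u v) p)) ∧
  (∀ p ∈ stripBd S u v, ∀ q ∈ stripBd S u v,
    connectedComponentIn (stripBd S u v) p ≠ connectedComponentIn (stripBd S u v) q →
    closure (connectedComponentIn (stripBd S u v) p) ∩
      closure (connectedComponentIn (stripBd S u v) q) = ∅)




noncomputable section
namespace Stmt5
open Filter Topology

/-! ### step and ramp functions -/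

def stp (y : ℝ) : ℝ := if 0 < y then 1 else 0
def ramp (y : ℝ) : ℝ := max 0 (min y 1)

lemma stp_nonneg (y : ℝ) : 0 ≤ stp y := by unfold stp; split <;> norm_num
lemma stp_le_one (y : ℝ) : stp y ≤ 1 := by unfold stp; split <;> norm_num
lemma stp_mono : Monotone stp := by
  intro a b hab
  unfold stp
  by_cases ha : 0 < a
  · rw [if_pos ha, if_pos (lt_of_lt_of_le ha hab)]
  · rw [if_neg ha]; split <;> norm_num

lemma ramp_nonneg (y : ℝ) : 0 ≤ ramp y := le_max_left _ _
lemma ramp_le_one (y : ℝ) : ramp y ≤ 1 := max_le (by norm_num) (min_le_right _ _)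
lemma ramp_mono : Monotone ramp := fun a b hab => max_le_max le_rfl (min_le_min hab le_rfl)
lemma continuous_ramp : Continuous ramp :=
  continuous_const.max (continuous_id.min continuous_const)
lemma ramp_eq_one {y : ℝ} (h : 1 ≤ y) : ramp y = 1 := by
  unfold ramp; rw [min_eq_right h, max_eq_right]; norm_num
lemma ramp_eq_zero {y : ℝ} (h : y ≤ 0) : ramp y = 0 := by
  unfold ramp; rw [max_eq_left]; exact le_trans (min_le_left _ _) h
lemma stp_eq_one {y : ℝ} (h : 0 < y) : stp y = 1 := if_pos h
lemma stp_eq_zero {y : ℝ} (h : y ≤ 0) : stp y = 0 := if_neg (not_lt.mpr h)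


/-! ### The countable set of "common endpoints" and the staircase sums -/

def Dset (B : Set ℝ) : Set ℝ :=
  {b | b ∉ B ∧ ∃ a c, a < b ∧ b < c ∧ Ioo a b ⊆ B ∧ Ioo b c ⊆ B}

lemma Dset_not_mem {B : Set ℝ} {b : ℝ} (hb : b ∈ Dset B) : b ∉ B := hb.1

lemma countable_Dset (B : Set ℝ) : (Dset B).Countable := by
  rw [Set.countable_coe_iff.symm]
  -- build an injection into ℚ × ℚ
  have key : ∀ d : ↥(Dset B), ∃ q : ℚ × ℚ,
      (q.1 : ℝ) < d ∧ (d : ℝ) < q.2 ∧ Ioo (q.1 : ℝ) d ⊆ B ∧ Ioo (d : ℝ) q.2 ⊆ B := by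
    rintro ⟨d, hd, a, c, had, hdc, hab, hbc⟩
    obtain ⟨q1, hq1a, hq1d⟩ := exists_rat_btwn had
    obtain ⟨q2, hq2d, hq2c⟩ := exists_rat_btwn hdc
    exact ⟨⟨q1, q2⟩, hq1d, hq2d,
      fun z hz => hab ⟨lt_trans hq1a hz.1, hz.2⟩,
      fun z hz => hbc ⟨hz.1, lt_trans hz.2 hq2c⟩⟩
  choose f hf1 hf2 hf3 hf4 using key
  have hinj : Function.Injective f := by
    intro d1 d2 h12
    by_contra hne
    have hne' : (d1 : ℝ) ≠ (d2 : ℝ) := fun h => hne (Subtype.ext h)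
    rcases lt_or_gt_of_ne hne' with h | h
    · have : (d1 : ℝ) ∈ Ioo ((f d2).1 : ℝ) (d2 : ℝ) := ⟨by rw [← h12]; exact hf1 d1, h⟩
      exact d1.2.1 (hf3 d2 this)
    · have : (d2 : ℝ) ∈ Ioo ((f d1).1 : ℝ) (d1 : ℝ) := ⟨by rw [h12]; exact hf1 d2, h⟩
      exact d2.2.1 (hf3 d1 this)
  exact Function.Injective.countable hinj

variable (B : Set ℝ)

def wgt (d : ↥(Dset B)) : ℝ :=
  (1/2 : ℝ) ^ (@Encodable.encode _ ((countable_Dset B).toEncodable) d)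

lemma wgt_pos (d : ↥(Dset B)) : 0 < wgt B d := pow_pos (by norm_num) _

lemma wgt_summable : Summable (wgt B) := by
  have h : Summable (fun n : ℕ => (1/2 : ℝ) ^ n) :=
    summable_geometric_of_lt_one (by norm_num) (by norm_num)
  exact h.comp_injective (@Encodable.encode_injective _ ((countable_Dset B).toEncodable))

def Afun (x : ℝ) : ℝ := ∑' d : ↥(Dset B), wgt B d * stp (x - d)
def Asm (s x : ℝ) : ℝ := ∑' d : ↥(Dset B), wgt B d * ramp ((x - d) / s)
def Wb : ℝ := ∑' d : ↥(Dset B), wgt B d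

lemma Afun_summable (x : ℝ) : Summable (fun d : ↥(Dset B) => wgt B d * stp (x - d)) := by
  apply Summable.of_nonneg_of_le (fun d => mul_nonneg (wgt_pos B d).le (stp_nonneg _))
    (fun d => ?_) (wgt_summable B)
  calc wgt B d * stp (x - d) ≤ wgt B d * 1 :=
        mul_le_mul_of_nonneg_left (stp_le_one _) (wgt_pos B d).le
    _ = wgt B d := mul_one _

lemma Asm_summable (s x : ℝ) : Summable (fun d : ↥(Dset B) => wgt B d * ramp ((x - d) / s)) := by
  apply Summable.of_nonneg_of_le (fun d => mul_nonneg (wgt_pos B d).le (ramp_nonneg _))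
    (fun d => ?_) (wgt_summable B)
  calc wgt B d * ramp ((x - d)/s) ≤ wgt B d * 1 :=
        mul_le_mul_of_nonneg_left (ramp_le_one _) (wgt_pos B d).le
    _ = wgt B d := mul_one _

lemma Afun_nonneg (x : ℝ) : 0 ≤ Afun B x :=
  tsum_nonneg (fun d => mul_nonneg (wgt_pos B d).le (stp_nonneg _))

lemma Afun_le_Wb (x : ℝ) : Afun B x ≤ Wb B :=
  Summable.tsum_le_tsum (fun d => calc
      wgt B d * stp (x - d) ≤ wgt B d * 1 :=
        mul_le_mul_of_nonneg_left (stp_le_one _) (wgt_pos B d).le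
      _ = wgt B d := mul_one _) (Afun_summable B x) (wgt_summable B)

lemma Asm_nonneg (s x : ℝ) : 0 ≤ Asm B s x :=
  tsum_nonneg (fun d => mul_nonneg (wgt_pos B d).le (ramp_nonneg _))

lemma Asm_le_Wb (s x : ℝ) : Asm B s x ≤ Wb B :=
  Summable.tsum_le_tsum (fun d => calc
      wgt B d * ramp ((x - d)/s) ≤ wgt B d * 1 :=
        mul_le_mul_of_nonneg_left (ramp_le_one _) (wgt_pos B d).le
      _ = wgt B d := mul_one _) (Asm_summable B s x) (wgt_summable B)

lemma Wb_nonneg : 0 ≤ Wb B := tsum_nonneg (fun d => (wgt_pos B d).le)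

lemma Afun_mono : Monotone (Afun B) := by
  intro a b hab
  exact Summable.tsum_le_tsum (fun d => mul_le_mul_of_nonneg_left
      (stp_mono (by linarith : a - d ≤ b - d)) (wgt_pos B d).le)
    (Afun_summable B a) (Afun_summable B b)

lemma Asm_mono {s : ℝ} (hs : 0 < s) : Monotone (Asm B s) := by
  intro a b hab
  exact Summable.tsum_le_tsum (fun d => mul_le_mul_of_nonneg_left
      (ramp_mono (div_le_div_of_nonneg_right (by linarith : a - (d:ℝ) ≤ b - d) hs.le))
      (wgt_pos B d).le)
    (Asm_summable B s a) (Asm_summable B s b)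
/-! ### locality, jump, and the staircase homeomorphism hB -/

variable {B}

lemma Dset_avoid {x0 δ : ℝ} (hδ : Ioo (x0 - δ) (x0 + δ) ⊆ B) (d : ↥(Dset B)) :
    (d : ℝ) ≤ x0 - δ ∨ x0 + δ ≤ (d : ℝ) := by
  by_contra h
  push_neg at h
  exact d.2.1 (hδ ⟨h.1, h.2⟩)

lemma Afun_local {x0 δ x : ℝ} (hδ : Ioo (x0 - δ) (x0 + δ) ⊆ B) (hδ0 : 0 < δ)
    (hx : |x - x0| < δ) : Afun B x = Afun B x0 := by
  unfold Afun
  congr 1; funext d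
  rcases Dset_avoid hδ d with h | h
  · rw [stp_eq_one (by rw [abs_lt] at hx; linarith), stp_eq_one (by linarith)]
  · rw [stp_eq_zero (by rw [abs_lt] at hx; linarith), stp_eq_zero (by linarith)]

lemma Asm_local {x0 δ s x : ℝ} (hδ : Ioo (x0 - δ) (x0 + δ) ⊆ B) (hδ0 : 0 < δ)
    (hx : |x - x0| ≤ δ/2) (hs0 : 0 < s) (hs : s ≤ δ/2) : Asm B s x = Afun B x0 := by
  unfold Asm Afun
  congr 1; funext d
  rcases Dset_avoid hδ d with h | h
  · rw [ramp_eq_one, stp_eq_one (by linarith)]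
    rw [le_div_iff₀ hs0, one_mul]
    rw [abs_le] at hx; linarith
  · rw [ramp_eq_zero, stp_eq_zero (by linarith)]
    apply div_nonpos_of_nonpos_of_nonneg ?_ hs0.le
    rw [abs_le] at hx; linarith

lemma Afun_jump {b x : ℝ} (hb : b ∈ Dset B) (hx : b < x) :
    Afun B b + wgt B ⟨b, hb⟩ ≤ Afun B x := by
  classical
  have h1 := Summable.tsum_eq_add_tsum_ite (Afun_summable B b) ⟨b, hb⟩
  have h2 := Summable.tsum_eq_add_tsum_ite (Afun_summable B x) ⟨b, hb⟩
  unfold Afun at *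
  rw [h1, h2, stp_eq_zero (by linarith), stp_eq_one (by linarith), mul_zero, mul_one, zero_add]
  have hrest : (∑' d : ↥(Dset B), if d = (⟨b, hb⟩ : ↥(Dset B)) then 0 else wgt B d * stp (b - d))
      ≤ ∑' d : ↥(Dset B), if d = (⟨b, hb⟩ : ↥(Dset B)) then 0 else wgt B d * stp (x - d) := by
    apply Summable.tsum_le_tsum ?_ ?_ ?_
    · intro d; split
      · exact le_rfl
      · exact mul_le_mul_of_nonneg_left (stp_mono (by linarith : b - (d:ℝ) ≤ x - d)) (wgt_pos B d).le
    · apply Summable.of_nonneg_of_le (fun d => ?_) (fun d => ?_) (wgt_summable B)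
      · split
        · exact le_rfl
        · exact mul_nonneg (wgt_pos B d).le (stp_nonneg _)
      · split
        · exact (wgt_pos B d).le
        · exact (mul_le_mul_of_nonneg_left (stp_le_one _) (wgt_pos B d).le).trans_eq (mul_one _)
    · apply Summable.of_nonneg_of_le (fun d => ?_) (fun d => ?_) (wgt_summable B)
      · split
        · exact le_rfl
        · exact mul_nonneg (wgt_pos B d).le (stp_nonneg _)
      · split
        · exact (wgt_pos B d).le
        · exact (mul_le_mul_of_nonneg_left (stp_le_one _) (wgt_pos B d).le).trans_eq (mul_one _)
  linarith

variable (B)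

/-- The staircase map: arctan plus jumps at common endpoints of components of `Bᶜ`. -/
def hB (x : ℝ) : ℝ := Real.arctan x + Afun B x

def CB : ℝ := Real.pi/2 + Wb B

lemma hB_strictMono : StrictMono (hB B) := by
  intro a b hab
  have h1 : Real.arctan a < Real.arctan b := Real.arctan_strictMono hab
  have h2 : Afun B a ≤ Afun B b := Afun_mono B hab.le
  unfold hB; linarith

lemma hB_abs_le (x : ℝ) : |hB B x| ≤ CB B := by
  unfold hB CB
  have h1 : Real.arctan x < Real.pi/2 := Real.arctan_lt_pi_div_two x
  have h1' : -(Real.pi/2) < Real.arctan x := Real.neg_pi_div_two_lt_arctan x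
  have h2 := Afun_nonneg B x
  have h3 := Afun_le_Wb B x
  rw [abs_le]
  constructor <;> linarith
/-! ### continuity of the staircase maps -/

lemma hBs_abs_le (s x : ℝ) : |Real.arctan x + Asm B s x| ≤ CB B := by
  unfold CB
  have h1 : Real.arctan x < Real.pi/2 := Real.arctan_lt_pi_div_two x
  have h1' : -(Real.pi/2) < Real.arctan x := Real.neg_pi_div_two_lt_arctan x
  have h2 := Asm_nonneg B s x
  have h3 := Asm_le_Wb B s x
  rw [abs_le]; constructor <;> linarith

lemma continuous_Asm_comp {X : Type*} [TopologicalSpace X] {sx ss : X → ℝ}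
    (hsx : Continuous sx) (hss : Continuous ss) (hpos : ∀ p, 0 < ss p) :
    Continuous (fun p => Asm B (ss p) (sx p)) := by
  unfold Asm
  apply continuous_tsum (u := wgt B) ?_ (wgt_summable B) ?_
  · intro d
    exact continuous_const.mul (continuous_ramp.comp
      ((hsx.sub continuous_const).div hss (fun p => (hpos p).ne')))
  · intro d p
    rw [Real.norm_eq_abs, abs_mul, abs_of_pos (wgt_pos B d),
      abs_of_nonneg (ramp_nonneg _)]
    exact (mul_le_mul_of_nonneg_left (ramp_le_one _) (wgt_pos B d).le).trans_eq (mul_one _)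

lemma continuousAt_hB {x0 δ : ℝ} (hδ : Ioo (x0 - δ) (x0 + δ) ⊆ B) (hδ0 : 0 < δ) :
    ContinuousAt (hB B) x0 := by
  have heq : (fun x => Real.arctan x + Afun B x0) =ᶠ[𝓝 x0] hB B := by
    apply eventuallyEq_of_mem (Ioo_mem_nhds (by linarith) (by linarith) :
      Ioo (x0 - δ) (x0 + δ) ∈ 𝓝 x0)
    intro x hx
    have : |x - x0| < δ := by rw [abs_lt]; constructor <;> [linarith [hx.1]; linarith [hx.2]]
    unfold hB
    rw [Afun_local hδ hδ0 this]
  exact (Real.continuous_arctan.continuousAt.add continuousAt_const).congr heq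

lemma continuousOn_hB (hBo : IsOpen B) : ContinuousOn (hB B) B := by
  intro x0 hx0
  obtain ⟨δ, hδ0, hδ⟩ := Metric.isOpen_iff.mp hBo x0 hx0
  have hsub : Ioo (x0 - δ) (x0 + δ) ⊆ B := fun z hz => hδ (by
    rw [Metric.mem_ball, Real.dist_eq, abs_lt]; constructor <;> [linarith [hz.1]; linarith [hz.2]])
  exact (continuousAt_hB (B := B) hsub hδ0).continuousWithinAt

/-- strictly monotone continuous maps send open sets to open sets -/
lemma isOpen_image_of_strictMono {g : ℝ → ℝ} {B : Set ℝ} (hBo : IsOpen B)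
    (hg : StrictMono g) (hgc : ContinuousOn g B) : IsOpen (g '' B) := by
  rw [isOpen_iff_mem_nhds]
  rintro y ⟨x0, hx0, rfl⟩
  obtain ⟨δ, hδ0, hδ⟩ := Metric.isOpen_iff.mp hBo x0 hx0
  have hsub : Icc (x0 - δ/2) (x0 + δ/2) ⊆ B := fun z hz => hδ (by
    rw [Metric.mem_ball, Real.dist_eq, abs_lt]
    constructor <;> [linarith [hz.1]; linarith [hz.2]])
  have hIcc : Icc (g (x0 - δ/2)) (g (x0 + δ/2)) ⊆ g '' Icc (x0 - δ/2) (x0 + δ/2) :=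
    intermediate_value_Icc (by linarith) (hgc.mono hsub)
  have : Ioo (g (x0 - δ/2)) (g (x0 + δ/2)) ⊆ g '' B :=
    fun z hz => (hIcc (Ioo_subset_Icc_self hz)).imp (fun w hw => ⟨hsub hw.1, hw.2⟩)
  exact mem_of_superset (Ioo_mem_nhds (hg (by linarith)) (hg (by linarith))) this
/-! ### connected components of open subsets of ℝ -/

section CC

variable {B : Set ℝ} {x x' : ℝ}

lemma cc_ordConnected (B : Set ℝ) (x : ℝ) : OrdConnected (connectedComponentIn B x) :=
  isPreconnected_connectedComponentIn.ordConnected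

lemma sSup_cc_not_mem (hBo : IsOpen B) (hx : x ∈ B)
    (hbdd : BddAbove (connectedComponentIn B x)) : sSup (connectedComponentIn B x) ∉ B := by
  set I := connectedComponentIn B x with hIdef
  have hxI : x ∈ I := mem_connectedComponentIn hx
  have hne : I.Nonempty := ⟨x, hxI⟩
  set b := sSup I with hbdef
  have hbI : b ∉ I := by
    intro hbI
    obtain ⟨ε, hε0, hε⟩ := Metric.isOpen_iff.mp (hBo.connectedComponentIn (x := x)) b hbI
    have : b + ε/2 ∈ I := hε (by rw [Metric.mem_ball, Real.dist_eq]; rw [abs_lt]; constructor <;> linarith)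
    have := le_csSup hbdd this
    linarith
  intro hbB
  set J := connectedComponentIn B b with hJdef
  have hbJ : b ∈ J := mem_connectedComponentIn hbB
  obtain ⟨ε, hε0, hε⟩ := Metric.isOpen_iff.mp (hBo.connectedComponentIn (x := b)) b hbJ
  obtain ⟨z, hzI, hzb⟩ := exists_lt_of_lt_csSup hne (by linarith : b - ε < b)
  have hzJ : z ∈ J := hε (by
    rw [Metric.mem_ball, Real.dist_eq, abs_lt]
    have := le_csSup hbdd hzI
    constructor <;> linarith)
  have hunion : IsPreconnected (I ∪ J) :=
    IsPreconnected.union z hzI hzJ isPreconnected_connectedComponentIn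
      isPreconnected_connectedComponentIn
  have hsub : I ∪ J ⊆ I := hunion.subset_connectedComponentIn (mem_union_left J hxI)
    (union_subset (connectedComponentIn_subset B x) (connectedComponentIn_subset B b))
  exact hbI (hsub (mem_union_right I hbJ))

lemma sInf_cc_not_mem (hBo : IsOpen B) (hx : x ∈ B)
    (hbdd : BddBelow (connectedComponentIn B x)) : sInf (connectedComponentIn B x) ∉ B := by
  set I := connectedComponentIn B x with hIdef
  have hxI : x ∈ I := mem_connectedComponentIn hx
  have hne : I.Nonempty := ⟨x, hxI⟩
  set b := sInf I with hbdef
  have hbI : b ∉ I := by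
    intro hbI
    obtain ⟨ε, hε0, hε⟩ := Metric.isOpen_iff.mp (hBo.connectedComponentIn (x := x)) b hbI
    have : b - ε/2 ∈ I := hε (by rw [Metric.mem_ball, Real.dist_eq, abs_lt]; constructor <;> linarith)
    have := csInf_le hbdd this
    linarith
  intro hbB
  set J := connectedComponentIn B b with hJdef
  have hbJ : b ∈ J := mem_connectedComponentIn hbB
  obtain ⟨ε, hε0, hε⟩ := Metric.isOpen_iff.mp (hBo.connectedComponentIn (x := b)) b hbJ
  obtain ⟨z, hzI, hzb⟩ := exists_lt_of_csInf_lt hne (by linarith : b < b + ε)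
  have hzJ : z ∈ J := hε (by
    rw [Metric.mem_ball, Real.dist_eq, abs_lt]
    have := csInf_le hbdd hzI
    constructor <;> linarith)
  have hunion : IsPreconnected (I ∪ J) :=
    IsPreconnected.union z hzI hzJ isPreconnected_connectedComponentIn
      isPreconnected_connectedComponentIn
  have hsub : I ∪ J ⊆ I := hunion.subset_connectedComponentIn (mem_union_left J hxI)
    (union_subset (connectedComponentIn_subset B x) (connectedComponentIn_subset B b))
  exact hbI (hsub (mem_union_right I hbJ))

lemma ordConn_lt_or_gt {I : Set ℝ} (hI : OrdConnected I) (hx' : x' ∉ I) :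
    (∀ z ∈ I, z < x') ∨ (∀ z ∈ I, x' < z) := by
  by_contra h
  push_neg at h
  obtain ⟨⟨z1, hz1, hz1'⟩, ⟨z2, hz2, hz2'⟩⟩ := h
  exact hx' (hI.out hz2 hz1 ⟨hz2', hz1'⟩)

lemma image_cc (hBo : IsOpen B) {g : ℝ → ℝ} (hg : StrictMono g) (hgc : ContinuousOn g B)
    (hx : x ∈ B) :
    g '' connectedComponentIn B x = connectedComponentIn (g '' B) (g x) := by
  set I := connectedComponentIn B x with hIdef
  have hxI : x ∈ I := mem_connectedComponentIn hx
  apply Subset.antisymm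
  · exact IsPreconnected.subset_connectedComponentIn
      (isPreconnected_connectedComponentIn.image g (hgc.mono (connectedComponentIn_subset B x)))
      ⟨x, hxI, rfl⟩ (image_mono (connectedComponentIn_subset B x))
  · rintro y hy
    have hyB : y ∈ g '' B := connectedComponentIn_subset _ _ hy
    obtain ⟨x', hx'B, rfl⟩ := hyB
    by_cases hx'I : x' ∈ I
    · exact ⟨x', hx'I, rfl⟩
    exfalso
    have hCord : OrdConnected (connectedComponentIn (g '' B) (g x)) :=
      isPreconnected_connectedComponentIn.ordConnected
    have hgxC : g x ∈ connectedComponentIn (g '' B) (g x) :=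
      mem_connectedComponentIn ⟨x, hx, rfl⟩
    rcases ordConn_lt_or_gt (cc_ordConnected B x) hx'I with h1 | h1
    · set b := sSup I with hbdef
      have hbdd : BddAbove I := ⟨x', fun z hz => (h1 z hz).le⟩
      have hbB : b ∉ B := sSup_cc_not_mem hBo hx hbdd
      have hxb : x < b := lt_of_le_of_ne (le_csSup hbdd hxI) (fun h => hbB (h ▸ hx))
      have hbx' : b < x' := lt_of_le_of_ne (csSup_le ⟨x, hxI⟩ (fun z hz => (h1 z hz).le))
        (fun h => hbB (h.symm ▸ hx'B))
      have hmC : g b ∈ connectedComponentIn (g '' B) (g x) :=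
        hCord.out hgxC hy ⟨(hg hxb).le, (hg hbx').le⟩
      obtain ⟨z, hzB, hz⟩ := connectedComponentIn_subset _ _ hmC
      exact hbB (hg.injective hz ▸ hzB)
    · set b := sInf I with hbdef
      have hbdd : BddBelow I := ⟨x', fun z hz => (h1 z hz).le⟩
      have hbB : b ∉ B := sInf_cc_not_mem hBo hx hbdd
      have hxb : b < x := lt_of_le_of_ne (csInf_le hbdd hxI) (fun h => hbB (h ▸ hx))
      have hbx' : x' < b := lt_of_le_of_ne (le_csInf ⟨x, hxI⟩ (fun z hz => (h1 z hz).le))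
        (fun h => hbB (h ▸ hx'B))
      have hmC : g b ∈ connectedComponentIn (g '' B) (g x) :=
        hCord.out hy hgxC ⟨(hg hbx').le, (hg hxb).le⟩
      obtain ⟨z, hzB, hz⟩ := connectedComponentIn_subset _ _ hmC
      exact hbB (hg.injective hz ▸ hzB)

end CC
/-! ### separation of closures of images of distinct components -/

section Sep

variable {B : Set ℝ}

lemma sep_aux (hBo : IsOpen B) {x y : ℝ} (hx : x ∈ B) (hy : y ∈ B)
    (hord : ∀ a ∈ connectedComponentIn B x, ∀ b ∈ connectedComponentIn B y, a < b) :
    closure (hB B '' connectedComponentIn B x) ∩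
      closure (hB B '' connectedComponentIn B y) = ∅ := by
  set I := connectedComponentIn B x with hIdef
  set J := connectedComponentIn B y with hJdef
  have hIB : I ⊆ B := connectedComponentIn_subset B x
  have hJB : J ⊆ B := connectedComponentIn_subset B y
  have hxI : x ∈ I := mem_connectedComponentIn hx
  have hyJ : y ∈ J := mem_connectedComponentIn hy
  have hIbdd : BddAbove I := ⟨y, fun a ha => (hord a ha y hyJ).le⟩
  have hJbdd : BddBelow J := ⟨x, fun b hb => (hord x hxI b hb).le⟩
  set b1 := sSup I with hb1def
  set a2 := sInf J with ha2def
  have hb1B : b1 ∉ B := sSup_cc_not_mem hBo hx hIbdd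
  have ha2B : a2 ∉ B := sInf_cc_not_mem hBo hy hJbdd
  have hle : b1 ≤ a2 :=
    csSup_le ⟨x, hxI⟩ (fun a ha => le_csInf ⟨y, hyJ⟩ (fun b hb => (hord a ha b hb).le))
  have hIlt : ∀ a ∈ I, a < b1 :=
    fun a ha => lt_of_le_of_ne (le_csSup hIbdd ha) (fun h => hb1B (by rw [← h]; exact hIB ha))
  have hJgt : ∀ b ∈ J, a2 < b :=
    fun b hb => lt_of_le_of_ne (csInf_le hJbdd hb) (fun h => ha2B (by rw [h]; exact hJB hb))
  have hclI : closure (hB B '' I) ⊆ Iic (hB B b1) :=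
    closure_minimal (by rintro z ⟨a, ha, rfl⟩; exact (hB_strictMono B (hIlt a ha)).le) isClosed_Iic
  rcases eq_or_lt_of_le hle with heq | hlt
  · -- common endpoint: use the jump
    rw [← heq] at hJgt ha2B
    have hbD : b1 ∈ Dset B := by
      refine ⟨hb1B, x, y, hIlt x hxI, hJgt y hyJ, ?_, ?_⟩
      · intro z hz
        obtain ⟨i, hiI, hzi⟩ := exists_lt_of_lt_csSup ⟨x, hxI⟩ hz.2
        exact hIB ((cc_ordConnected B x).out hxI hiI ⟨hz.1.le, hzi.le⟩)
      · intro z hz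
        have hz1' : sInf J < z := by rw [ha2def.symm, ← heq]; exact hz.1
        obtain ⟨j, hjJ, hjz⟩ := exists_lt_of_csInf_lt ⟨y, hyJ⟩ hz1'
        exact hJB ((cc_ordConnected B y).out hjJ hyJ ⟨hjz.le, hz.2.le⟩)
    have hw : 0 < wgt B ⟨b1, hbD⟩ := wgt_pos B _
    have hclJ : closure (hB B '' J) ⊆ Ici (hB B b1 + wgt B ⟨b1, hbD⟩) := by
      apply closure_minimal ?_ isClosed_Ici
      rintro z ⟨b, hb, rfl⟩
      have hjump := Afun_jump hbD (hJgt b hb)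
      have harc : Real.arctan b1 < Real.arctan b := Real.arctan_strictMono (hJgt b hb)
      unfold hB
      simp only [mem_Ici]
      linarith
    rw [eq_empty_iff_forall_notMem]
    rintro z ⟨hz1, hz2⟩
    have := hclI hz1
    have := hclJ hz2
    simp only [mem_Iic, mem_Ici] at *
    linarith
  · have hclJ : closure (hB B '' J) ⊆ Ici (hB B a2) :=
      closure_minimal (by rintro z ⟨b, hb, rfl⟩; exact (hB_strictMono B (hJgt b hb)).le) isClosed_Ici
    have hlt' : hB B b1 < hB B a2 := hB_strictMono B hlt
    rw [eq_empty_iff_forall_notMem]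
    rintro z ⟨hz1, hz2⟩
    have := hclI hz1
    have := hclJ hz2
    simp only [mem_Iic, mem_Ici] at *
    linarith

lemma closure_image_cc_disjoint (hBo : IsOpen B) {x y : ℝ} (hx : x ∈ B) (hy : y ∈ B)
    (hne : connectedComponentIn B x ≠ connectedComponentIn B y) :
    closure (hB B '' connectedComponentIn B x) ∩
      closure (hB B '' connectedComponentIn B y) = ∅ := by
  have hxI := mem_connectedComponentIn hx
  have hyJ := mem_connectedComponentIn hy
  have hyI : y ∉ connectedComponentIn B x := by
    intro hyI
    exact hne (connectedComponentIn_eq hyI)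
  rcases ordConn_lt_or_gt (cc_ordConnected B x) hyI with h1 | h1
  · apply sep_aux hBo hx hy
    intro a ha b hb
    by_contra hab
    push_neg at hab
    have haJ : a ∈ connectedComponentIn B y :=
      (cc_ordConnected B y).out hb hyJ ⟨hab, (h1 a ha).le⟩
    exact hne ((connectedComponentIn_eq ha).trans (connectedComponentIn_eq haJ).symm)
  · rw [inter_comm]
    apply sep_aux hBo hy hx
    intro b hb a ha
    by_contra hab
    push_neg at hab
    have haJ : a ∈ connectedComponentIn B y :=
      (cc_ordConnected B y).out hyJ hb ⟨(h1 a ha).le, hab⟩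
    exact hne ((connectedComponentIn_eq ha).trans (connectedComponentIn_eq haJ).symm)

end Sep
/-! ### connected components of sets living on two horizontal lines -/

section Rows

lemma image_prod_singleton {E : Set ℝ} {u : ℝ} :
    (fun x => (x, u)) '' E = E ×ˢ ({u} : Set ℝ) := by
  ext ⟨a, b⟩
  simp only [mem_image, mem_prod, mem_singleton_iff, Prod.mk.injEq]
  constructor
  · rintro ⟨x, hx, rfl, rfl⟩; exact ⟨hx, rfl⟩
  · rintro ⟨ha, rfl⟩; exact ⟨a, ha, rfl, rfl⟩

lemma cc_two_rows {E1 E2 : Set ℝ} {u v : ℝ} (huv : u ≠ v) {y0 : ℝ} (hy0 : y0 ∈ E1) :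
    connectedComponentIn (E1 ×ˢ ({u} : Set ℝ) ∪ E2 ×ˢ ({v} : Set ℝ)) (y0, u) =
      (connectedComponentIn E1 y0) ×ˢ ({u} : Set ℝ) := by
  set W := E1 ×ˢ ({u} : Set ℝ) ∪ E2 ×ˢ ({v} : Set ℝ) with hWdef
  have hmem : (y0, u) ∈ W := mem_union_left _ ⟨hy0, rfl⟩
  apply Subset.antisymm
  · -- the component lies in the row {t = u} and its projection is connected
    set C := connectedComponentIn W (y0, u) with hCdef
    have hCW : C ⊆ W := connectedComponentIn_subset _ _
    have hCpre : IsPreconnected C := isPreconnected_connectedComponentIn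
    have hCu : ∀ p ∈ C, p.2 = u := by
      intro p hp
      by_contra hpu
      have hpv : p.2 = v := by
        rcases hCW hp with h | h
        · exact absurd h.2 hpu
        · exact h.2
      -- snd '' C is a preconnected subset of {u, v} containing both u and v
      have hsnd : IsPreconnected (Prod.snd '' C) :=
        hCpre.image Prod.snd continuous_snd.continuousOn
      have hord : OrdConnected (Prod.snd '' C) := hsnd.ordConnected
      have huC : u ∈ Prod.snd '' C := ⟨(y0, u), mem_connectedComponentIn hmem, rfl⟩
      have hvC : v ∈ Prod.snd '' C := ⟨p, hp, hpv⟩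
      have hmid : (u + v)/2 ∈ Prod.snd '' C := by
        rcases lt_or_gt_of_ne huv with h | h
        · exact hord.out huC hvC ⟨by linarith, by linarith⟩
        · exact hord.out hvC huC ⟨by linarith, by linarith⟩
      obtain ⟨q, hqC, hq⟩ := hmid
      have hq2 : q.2 = u ∨ q.2 = v := by
        rcases hCW hqC with h | h
        · exact Or.inl h.2
        · exact Or.inr h.2
      rcases hq2 with h | h <;> rw [h] at hq <;> exact huv (by linarith)
    have hCE1 : ∀ p ∈ C, p.1 ∈ E1 := by
      intro p hp
      rcases hCW hp with h | h
      · exact h.1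
      · exact absurd (h.2.symm.trans (hCu p hp)) (fun hh => huv hh.symm)
    have hfst : IsPreconnected (Prod.fst '' C) :=
      hCpre.image Prod.fst continuous_fst.continuousOn
    have hsub : Prod.fst '' C ⊆ connectedComponentIn E1 y0 :=
      hfst.subset_connectedComponentIn ⟨(y0, u), mem_connectedComponentIn hmem, rfl⟩
        (by rintro z ⟨p, hp, rfl⟩; exact hCE1 p hp)
    intro p hp
    exact ⟨hsub ⟨p, hp, rfl⟩, hCu p hp⟩
  · rw [← image_prod_singleton]
    apply IsPreconnected.subset_connectedComponentIn
    · exact (isPreconnected_connectedComponentIn).image _ (Continuous.continuousOn (by continuity))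
    · exact ⟨y0, mem_connectedComponentIn hy0, rfl⟩
    · rintro q ⟨z, hz, rfl⟩
      exact mem_union_left _ ⟨connectedComponentIn_subset _ _ hz, rfl⟩

end Rows
/-! ### the foliated map -/

section Map

variable (u v : ℝ) (Bu Bv : Set ℝ)

def fInt (x t : ℝ) : ℝ :=
  (t - u) * (v - t) * x +
    ((v - t) * (Real.arctan x + Asm Bu (t - u) x) +
     (t - u) * (Real.arctan x + Asm Bv (v - t) x)) / (v - u)

def ff (x t : ℝ) : ℝ :=
  if t ≤ u then hB Bu x else if v ≤ t then hB Bv x else fInt u v Bu Bv x t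

def FF (p : ℝ × ℝ) : ℝ × ℝ := (ff u v Bu Bv p.1 p.2, p.2)

def GG (q : ℝ × ℝ) : ℝ × ℝ := (Function.invFun (fun x => ff u v Bu Bv x q.2) q.1, q.2)

variable {u v}

lemma ff_at_u (x : ℝ) : ff u v Bu Bv x u = hB Bu x := by unfold ff; rw [if_pos le_rfl]

lemma ff_at_v (huv : u < v) (x : ℝ) : ff u v Bu Bv x v = hB Bv x := by
  unfold ff; rw [if_neg (by linarith), if_pos le_rfl]

lemma ff_int {t : ℝ} (ht : t ∈ Ioo u v) (x : ℝ) :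
    ff u v Bu Bv x t = fInt u v Bu Bv x t := by
  unfold ff; rw [if_neg (by exact not_le.mpr ht.1), if_neg (by exact not_le.mpr ht.2)]

lemma fInt_strictMono (huv : u < v) {t : ℝ} (ht : t ∈ Ioo u v) :
    StrictMono (fun x => fInt u v Bu Bv x t) := by
  intro a b hab
  have hc : 0 < (t - u) * (v - t) := mul_pos (by linarith [ht.1]) (by linarith [ht.2])
  have harc : Real.arctan a < Real.arctan b := Real.arctan_strictMono hab
  have hA1 : Asm Bu (t - u) a ≤ Asm Bu (t - u) b := Asm_mono Bu (by linarith [ht.1]) hab.le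
  have hA2 : Asm Bv (v - t) a ≤ Asm Bv (v - t) b := Asm_mono Bv (by linarith [ht.2]) hab.le
  have h1 : (v - t) * (Real.arctan a + Asm Bu (t - u) a) ≤
      (v - t) * (Real.arctan b + Asm Bu (t - u) b) :=
    mul_le_mul_of_nonneg_left (by linarith) (by linarith [ht.2])
  have h2 : (t - u) * (Real.arctan a + Asm Bv (v - t) a) ≤
      (t - u) * (Real.arctan b + Asm Bv (v - t) b) :=
    mul_le_mul_of_nonneg_left (by linarith) (by linarith [ht.1])
  have hlin : (t - u) * (v - t) * a < (t - u) * (v - t) * b :=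
    mul_lt_mul_of_pos_left hab hc
  have hdiv : ((v - t) * (Real.arctan a + Asm Bu (t - u) a) +
      (t - u) * (Real.arctan a + Asm Bv (v - t) a)) / (v - u) ≤
      ((v - t) * (Real.arctan b + Asm Bu (t - u) b) +
      (t - u) * (Real.arctan b + Asm Bv (v - t) b)) / (v - u) :=
    div_le_div_of_nonneg_right (by linarith) (by linarith)
  unfold fInt
  linarith

lemma ff_strictMono (huv : u < v) (t : ℝ) : StrictMono (fun x => ff u v Bu Bv x t) := by
  by_cases h1 : t ≤ u
  · simp only [ff, if_pos h1]; exact hB_strictMono Bu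
  by_cases h2 : v ≤ t
  · simp only [ff, if_neg h1, if_pos h2]; exact hB_strictMono Bv
  · simp only [ff, if_neg h1, if_neg h2]
    exact fInt_strictMono Bu Bv huv ⟨not_le.mp h1, not_le.mp h2⟩

lemma ff_injective (huv : u < v) (t : ℝ) : Function.Injective (fun x => ff u v Bu Bv x t) :=
  (ff_strictMono Bu Bv huv t).injective

lemma CB_nonneg (B : Set ℝ) : 0 ≤ CB B := by
  unfold CB
  have := Wb_nonneg B
  have := Real.pi_pos
  linarith

lemma fInt_bound (huv : u < v) {t : ℝ} (ht : t ∈ Icc u v) (x : ℝ) :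
    |fInt u v Bu Bv x t - (t - u) * (v - t) * x| ≤ CB Bu + CB Bv := by
  have h1 := hBs_abs_le Bu (t - u) x
  have h2 := hBs_abs_le Bv (v - t) x
  have hcu := CB_nonneg Bu
  have hcv := CB_nonneg Bv
  have htu : 0 ≤ t - u := by linarith [ht.1]
  have hvt : 0 ≤ v - t := by linarith [ht.2]
  unfold fInt
  rw [add_sub_cancel_left, abs_div, abs_of_pos (by linarith : (0:ℝ) < v - u)]
  rw [div_le_iff₀ (by linarith : (0:ℝ) < v - u)]
  calc |(v - t) * (Real.arctan x + Asm Bu (t - u) x) +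
      (t - u) * (Real.arctan x + Asm Bv (v - t) x)|
      ≤ |(v - t) * (Real.arctan x + Asm Bu (t - u) x)| +
        |(t - u) * (Real.arctan x + Asm Bv (v - t) x)| := abs_add_le _ _
    _ = (v - t) * |Real.arctan x + Asm Bu (t - u) x| +
        (t - u) * |Real.arctan x + Asm Bv (v - t) x| := by
          rw [abs_mul, abs_mul, abs_of_nonneg hvt, abs_of_nonneg htu]
    _ ≤ (v - t) * CB Bu + (t - u) * CB Bv := by
          have := mul_le_mul_of_nonneg_left h1 hvt
          have := mul_le_mul_of_nonneg_left h2 htu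
          linarith
    _ ≤ (CB Bu + CB Bv) * (v - u) := by nlinarith [ht.1, ht.2]

lemma continuous_fInt_x (huv : u < v) {t : ℝ} (ht : t ∈ Ioo u v) :
    Continuous (fun x => fInt u v Bu Bv x t) := by
  have h1 : Continuous (fun x => Asm Bu (t - u) x) :=
    continuous_Asm_comp Bu continuous_id continuous_const (fun _ => by linarith [ht.1])
  have h2 : Continuous (fun x => Asm Bv (v - t) x) :=
    continuous_Asm_comp Bv continuous_id continuous_const (fun _ => by linarith [ht.2])
  unfold fInt
  exact ((continuous_const.mul continuous_id).add
    (((continuous_const.mul (Real.continuous_arctan.add h1)).add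
      (continuous_const.mul (Real.continuous_arctan.add h2))).div_const _))

lemma ff_surjective (huv : u < v) {t : ℝ} (ht : t ∈ Ioo u v) :
    Function.Surjective (fun x => ff u v Bu Bv x t) := by
  have hc : (0:ℝ) < (t - u) * (v - t) := mul_pos (by linarith [ht.1]) (by linarith [ht.2])
  set M := CB Bu + CB Bv with hM
  have hb := fun x => fInt_bound Bu Bv huv (Ioo_subset_Icc_self ht) x
  have heq : (fun x => ff u v Bu Bv x t) = (fun x => fInt u v Bu Bv x t) := by
    funext x; exact ff_int Bu Bv ht x
  rw [heq]
  apply Continuous.surjective (continuous_fInt_x Bu Bv huv ht)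
  · apply tendsto_atTop_mono (fun x => ?_)
      (tendsto_atTop_add_const_right _ (-M) (Tendsto.const_mul_atTop hc tendsto_id))
    have := abs_le.mp (hb x)
    simp only [id_eq]
    linarith [this.1]
  · apply tendsto_atBot_mono (fun x => ?_)
      (tendsto_atBot_add_const_right _ M (Tendsto.const_mul_atBot hc tendsto_id))
    have := abs_le.mp (hb x)
    simp only [id_eq]
    linarith [this.2]

end Map
/-! ### continuity of FF on the strip -/

section Cont

variable {u v : ℝ} (Bu Bv : Set ℝ)

lemma exists_Ioo_subset {B : Set ℝ} {x : ℝ} (hB : IsOpen B) (hx : x ∈ B) :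
    ∃ δ > 0, Ioo (x - δ) (x + δ) ⊆ B := by
  obtain ⟨δ, hδ0, hδ⟩ := Metric.isOpen_iff.mp hB x hx
  exact ⟨δ, hδ0, fun z hz => hδ (by
    rw [Metric.mem_ball, Real.dist_eq, abs_lt]
    exact ⟨by linarith [hz.1], by linarith [hz.2]⟩)⟩

lemma contOn_Asm_upper (B : Set ℝ) (c : ℝ) :
    ContinuousOn (fun p : ℝ × ℝ => Asm B (c - p.2) p.1) {p : ℝ × ℝ | p.2 < c} := by
  rw [continuousOn_iff_continuous_restrict]
  exact continuous_Asm_comp B (continuous_fst.comp continuous_subtype_val)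
    (continuous_const.sub (continuous_snd.comp continuous_subtype_val))
    (fun p => sub_pos.mpr p.2)

lemma contOn_Asm_lower (B : Set ℝ) (c : ℝ) :
    ContinuousOn (fun p : ℝ × ℝ => Asm B (p.2 - c) p.1) {p : ℝ × ℝ | c < p.2} := by
  rw [continuousOn_iff_continuous_restrict]
  exact continuous_Asm_comp B (continuous_fst.comp continuous_subtype_val)
    ((continuous_snd.comp continuous_subtype_val).sub continuous_const)
    (fun p => sub_pos.mpr p.2)

lemma isOpen_band (u v : ℝ) : IsOpen {p : ℝ × ℝ | u < p.2 ∧ p.2 < v} :=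
  (isOpen_lt continuous_const continuous_snd).inter (isOpen_lt continuous_snd continuous_const)

lemma contOn_fInt (huv : u < v) :
    ContinuousOn (fun p : ℝ × ℝ => fInt u v Bu Bv p.1 p.2) {p : ℝ × ℝ | u < p.2 ∧ p.2 < v} := by
  have h1 : ContinuousOn (fun p : ℝ × ℝ => Asm Bu (p.2 - u) p.1)
      {p : ℝ × ℝ | u < p.2 ∧ p.2 < v} := (contOn_Asm_lower Bu u).mono (fun p hp => hp.1)
  have h2 : ContinuousOn (fun p : ℝ × ℝ => Asm Bv (v - p.2) p.1)
      {p : ℝ × ℝ | u < p.2 ∧ p.2 < v} := (contOn_Asm_upper Bv v).mono (fun p hp => hp.2)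
  have harc : ContinuousOn (fun p : ℝ × ℝ => Real.arctan p.1)
      {p : ℝ × ℝ | u < p.2 ∧ p.2 < v} :=
    (Real.continuous_arctan.comp continuous_fst).continuousOn
  unfold fInt
  apply ContinuousOn.add
  · exact (Continuous.continuousOn (by continuity))
  · apply ContinuousOn.div_const
    apply ContinuousOn.add
    · exact ContinuousOn.mul (Continuous.continuousOn (by continuity)) (harc.add h1)
    · exact ContinuousOn.mul (Continuous.continuousOn (by continuity)) (harc.add h2)

variable {Bu Bv}

lemma continuousOn_ffc (huv : u < v) (hBu : IsOpen Bu) (hBv : IsOpen Bv) :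
    ContinuousOn (fun p : ℝ × ℝ => ff u v Bu Bv p.1 p.2)
      (univ ×ˢ Ioo u v ∪ Bu ×ˢ {u} ∪ Bv ×ˢ {v}) := by
  set S := univ ×ˢ Ioo u v ∪ Bu ×ˢ {u} ∪ Bv ×ˢ {v} with hSdef
  intro p0 hp0
  rcases hp0 with (⟨-, ht0⟩ | ⟨hx0, ht0⟩) | ⟨hx0, ht0⟩
  · -- interior point
    apply ContinuousWithinAt.mono ?_ (subset_univ S)
    rw [continuousWithinAt_univ]
    apply ContinuousAt.congr ((contOn_fInt Bu Bv huv).continuousAt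
      ((isOpen_band u v).mem_nhds ⟨ht0.1, ht0.2⟩))
    apply eventually_of_mem ((isOpen_band u v).mem_nhds ⟨ht0.1, ht0.2⟩)
    intro p hp
    exact (ff_int Bu Bv ⟨hp.1, hp.2⟩ p.1).symm
  · -- bottom boundary point p0 = (x0, u)
    rw [mem_singleton_iff] at ht0
    obtain ⟨x0, t0⟩ := p0
    simp only at hx0 ht0
    rw [eq_comm] at ht0
    subst ht0
    obtain ⟨δ, hδ0, hδ⟩ := exists_Ioo_subset hBu hx0
    set Ψ : ℝ × ℝ → ℝ := fun p => (p.2 - u) * (v - p.2) * p.1 +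
      ((v - p.2) * (Real.arctan p.1 + Afun Bu x0) +
       (p.2 - u) * (Real.arctan p.1 + Asm Bv (v - p.2) p.1)) / (v - u) with hΨdef
    have hΨcont : ContinuousAt Ψ (x0, u) := by
      have hAv : ContinuousAt (fun p : ℝ × ℝ => Asm Bv (v - p.2) p.1) (x0, u) :=
        (contOn_Asm_upper Bv v).continuousAt
          ((isOpen_lt continuous_snd continuous_const).mem_nhds (by simpa using huv))
      have harc : ContinuousAt (fun p : ℝ × ℝ => Real.arctan p.1) (x0, u) :=
        (Real.continuous_arctan.comp continuous_fst).continuousAt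
      exact (((continuous_snd.sub continuous_const).mul
          (continuous_const.sub continuous_snd)).mul continuous_fst).continuousAt.add
        ((((continuous_const.sub continuous_snd).continuousAt.mul
            (harc.add continuousAt_const)).add
          ((continuous_snd.sub continuous_const).continuousAt.mul (harc.add hAv))).div_const _)
    set N : Set (ℝ × ℝ) := {p | |p.1 - x0| < δ/2 ∧ p.2 < u + min (δ/2) (v - u)} with hNdef
    have hNopen : IsOpen N := by
      rw [hNdef, setOf_and]
      exact (isOpen_lt ((continuous_fst.sub continuous_const).abs) continuous_const).inter
        (isOpen_lt continuous_snd continuous_const)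
    have hNmem : N ∈ 𝓝 ((x0 : ℝ), u) := hNopen.mem_nhds
      ⟨by simpa using hδ0, by simp [lt_min_iff]; constructor <;> linarith⟩
    have heq : ∀ p ∈ S ∩ N, ff u v Bu Bv p.1 p.2 = Ψ p := by
      rintro p ⟨hpS, hpN⟩
      rcases hpS with (⟨-, ht⟩ | ⟨h1, h2⟩) | ⟨h1, h2⟩
      · -- interior
        rw [ff_int Bu Bv ⟨ht.1, ht.2⟩]
        have hAsm : Asm Bu (p.2 - u) p.1 = Afun Bu x0 :=
          Asm_local hδ hδ0 (le_of_lt hpN.1) (by linarith [ht.1])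
            (by have := hpN.2; have := min_le_left (δ/2) (v - u); linarith)
        unfold fInt
        rw [hAsm]
      · -- p.2 = u
        rw [mem_singleton_iff] at h2
        rw [h2, ff_at_u Bu Bv p.1]
        simp only [hΨdef, h2, sub_self, zero_mul, mul_zero, zero_add, add_zero]
        unfold hB
        rw [Afun_local hδ hδ0 (lt_of_lt_of_le hpN.1 (by linarith))]
        have hvu : v - u ≠ 0 := by linarith
        field_simp
      · -- p.2 = v : impossible
        rw [mem_singleton_iff] at h2
        exfalso
        have := hpN.2
        rw [h2] at this
        have := min_le_right (δ/2) (v - u)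
        linarith
    apply ContinuousWithinAt.congr_of_eventuallyEq hΨcont.continuousWithinAt
    · apply Filter.eventuallyEq_of_mem
        (inter_mem self_mem_nhdsWithin (mem_nhdsWithin_of_mem_nhds hNmem))
      intro p hp
      exact heq p hp
    · exact heq (x0, u) ⟨Or.inl (Or.inr ⟨hx0, rfl⟩), ⟨by simpa using hδ0,
        by simp [lt_min_iff]; constructor <;> linarith⟩⟩
  · -- top boundary point p0 = (x0, v)
    rw [mem_singleton_iff] at ht0
    obtain ⟨x0, t0⟩ := p0
    simp only at hx0 ht0
    rw [eq_comm] at ht0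
    subst ht0
    obtain ⟨δ, hδ0, hδ⟩ := exists_Ioo_subset hBv hx0
    set Ψ : ℝ × ℝ → ℝ := fun p => (p.2 - u) * (v - p.2) * p.1 +
      ((v - p.2) * (Real.arctan p.1 + Asm Bu (p.2 - u) p.1) +
       (p.2 - u) * (Real.arctan p.1 + Afun Bv x0)) / (v - u) with hΨdef
    have hΨcont : ContinuousAt Ψ (x0, v) := by
      have hAu : ContinuousAt (fun p : ℝ × ℝ => Asm Bu (p.2 - u) p.1) (x0, v) :=
        (contOn_Asm_lower Bu u).continuousAt
          ((isOpen_lt continuous_const continuous_snd).mem_nhds (by simpa using huv))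
      have harc : ContinuousAt (fun p : ℝ × ℝ => Real.arctan p.1) (x0, v) :=
        (Real.continuous_arctan.comp continuous_fst).continuousAt
      exact (((continuous_snd.sub continuous_const).mul
          (continuous_const.sub continuous_snd)).mul continuous_fst).continuousAt.add
        ((((continuous_const.sub continuous_snd).continuousAt.mul
            (harc.add hAu)).add
          ((continuous_snd.sub continuous_const).continuousAt.mul
            (harc.add continuousAt_const))).div_const _)
    set N : Set (ℝ × ℝ) := {p | |p.1 - x0| < δ/2 ∧ v - min (δ/2) (v - u) < p.2} with hNdef
    have hNopen : IsOpen N := by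
      rw [hNdef, setOf_and]
      exact (isOpen_lt ((continuous_fst.sub continuous_const).abs) continuous_const).inter
        (isOpen_lt continuous_const continuous_snd)
    have hNmem : N ∈ 𝓝 ((x0 : ℝ), v) := hNopen.mem_nhds
      ⟨by simpa using hδ0, by simp [lt_min_iff, sub_lt_self_iff]; constructor <;> linarith⟩
    have heq : ∀ p ∈ S ∩ N, ff u v Bu Bv p.1 p.2 = Ψ p := by
      rintro p ⟨hpS, hpN⟩
      rcases hpS with (⟨-, ht⟩ | ⟨h1, h2⟩) | ⟨h1, h2⟩
      · -- interior
        rw [ff_int Bu Bv ⟨ht.1, ht.2⟩]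
        have hAsm : Asm Bv (v - p.2) p.1 = Afun Bv x0 :=
          Asm_local hδ hδ0 (le_of_lt hpN.1) (by linarith [ht.2])
            (by have := hpN.2; have := min_le_left (δ/2) (v - u); linarith)
        unfold fInt
        rw [hAsm]
      · -- p.2 = u : impossible
        rw [mem_singleton_iff] at h2
        exfalso
        have := hpN.2
        rw [h2] at this
        have := min_le_right (δ/2) (v - u)
        linarith
      · -- p.2 = v
        rw [mem_singleton_iff] at h2
        rw [h2, ff_at_v Bu Bv huv p.1]
        simp only [hΨdef, h2, sub_self, zero_mul, mul_zero, zero_add, add_zero]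
        unfold hB
        rw [Afun_local hδ hδ0 (lt_of_lt_of_le hpN.1 (by linarith))]
        have hvu : v - u ≠ 0 := by linarith
        field_simp
    apply ContinuousWithinAt.congr_of_eventuallyEq hΨcont.continuousWithinAt
    · apply Filter.eventuallyEq_of_mem
        (inter_mem self_mem_nhdsWithin (mem_nhdsWithin_of_mem_nhds hNmem))
      intro p hp
      exact heq p hp
    · exact heq (x0, v) ⟨Or.inr ⟨hx0, rfl⟩, ⟨by simpa using hδ0,
        by simp [lt_min_iff, sub_lt_self_iff]; constructor <;> linarith⟩⟩

lemma continuousOn_FF (huv : u < v) (hBu : IsOpen Bu) (hBv : IsOpen Bv) :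
    ContinuousOn (FF u v Bu Bv) (univ ×ˢ Ioo u v ∪ Bu ×ˢ {u} ∪ Bv ×ˢ {v}) :=
  (continuousOn_ffc huv hBu hBv).prodMk continuous_snd.continuousOn

end Cont
/-! ### continuity of the inverse map -/

section Inv

def Sset (u v : ℝ) (Bu Bv : Set ℝ) : Set (ℝ × ℝ) :=
  univ ×ˢ Ioo u v ∪ Bu ×ˢ {u} ∪ Bv ×ˢ {v}

variable {u v : ℝ} {Bu Bv : Set ℝ}

lemma Sset_slab (huv : u < v) {p : ℝ × ℝ} (hp : p ∈ Sset u v Bu Bv) : p.2 ∈ Icc u v := by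
  rcases hp with (⟨-, ht⟩ | ⟨-, ht⟩) | ⟨-, ht⟩
  · exact Ioo_subset_Icc_self ht
  · rw [mem_singleton_iff] at ht; rw [ht]; exact ⟨le_rfl, huv.le⟩
  · rw [mem_singleton_iff] at ht; rw [ht]; exact ⟨huv.le, le_rfl⟩

lemma interior_subset_Sset {p : ℝ × ℝ} (hp : p.2 ∈ Ioo u v) : p ∈ Sset u v Bu Bv :=
  Or.inl (Or.inl ⟨mem_univ _, hp⟩)

lemma GG_FF (huv : u < v) (Bu Bv : Set ℝ) (p : ℝ × ℝ) :
    GG u v Bu Bv (FF u v Bu Bv p) = p := by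
  unfold GG FF
  simp only
  rw [Function.leftInverse_invFun (ff_injective Bu Bv huv p.2) p.1]

lemma GG_tendsto_aux (huv : u < v) (hBu : IsOpen Bu) (hBv : IsOpen Bv)
    {p0 : ℝ × ℝ} (hp0S : p0 ∈ Sset u v Bu Bv)
    (hkey : ∀ ε > 0, ∃ ε' > 0, ε' ≤ ε ∧
      ((p0.1 - ε', p0.2) ∈ Sset u v Bu Bv ∧ (p0.1 + ε', p0.2) ∈ Sset u v Bu Bv) ∧
      ∀ᶠ q in 𝓝[FF u v Bu Bv '' Sset u v Bu Bv] (FF u v Bu Bv p0),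
        ((p0.1 - ε', q.2) ∈ Sset u v Bu Bv ∧ (p0.1 + ε', q.2) ∈ Sset u v Bu Bv)) :
    ContinuousWithinAt (GG u v Bu Bv) (FF u v Bu Bv '' Sset u v Bu Bv) (FF u v Bu Bv p0) := by
  set S := Sset u v Bu Bv with hS
  set S' := FF u v Bu Bv '' S with hS'
  set q0 := FF u v Bu Bv p0 with hq0
  have hGp0 : GG u v Bu Bv q0 = p0 := GG_FF huv Bu Bv p0
  unfold ContinuousWithinAt
  rw [hGp0]
  have hsnd : Tendsto (fun q : ℝ × ℝ => q.2) (𝓝[S'] q0) (𝓝 p0.2) := by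
    have : Tendsto (fun q : ℝ × ℝ => q.2) (𝓝 q0) (𝓝 q0.2) := continuous_snd.tendsto q0
    exact this.mono_left nhdsWithin_le_nhds
  have hfst : Tendsto (fun q : ℝ × ℝ => q.1) (𝓝[S'] q0) (𝓝 (ff u v Bu Bv p0.1 p0.2)) := by
    have : Tendsto (fun q : ℝ × ℝ => q.1) (𝓝 q0) (𝓝 q0.1) := continuous_fst.tendsto q0
    exact this.mono_left nhdsWithin_le_nhds
  have hmain : Tendsto (fun q : ℝ × ℝ =>
      Function.invFun (fun x => ff u v Bu Bv x q.2) q.1) (𝓝[S'] q0) (𝓝 p0.1) := by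
    rw [Metric.tendsto_nhds]
    intro ε hε
    obtain ⟨ε', hε'0, hε'ε, ⟨hmL, hmR⟩, hev⟩ := hkey ε hε
    -- tendsto of the comparison maps
    have hcompR : Tendsto (fun q : ℝ × ℝ => ff u v Bu Bv (p0.1 + ε') q.2) (𝓝[S'] q0)
        (𝓝 (ff u v Bu Bv (p0.1 + ε') p0.2)) := by
      have hm : Tendsto (fun q : ℝ × ℝ => ((p0.1 + ε' : ℝ), q.2)) (𝓝[S'] q0)
          (𝓝[S] (p0.1 + ε', p0.2)) := by
        rw [tendsto_nhdsWithin_iff]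
        constructor
        · exact (tendsto_const_nhds.prodMk_nhds hsnd)
        · exact hev.mono (fun q hq => hq.2)
      exact Filter.Tendsto.comp ((continuousOn_ffc huv hBu hBv) (p0.1 + ε', p0.2) hmR) hm
    have hcompL : Tendsto (fun q : ℝ × ℝ => ff u v Bu Bv (p0.1 - ε') q.2) (𝓝[S'] q0)
        (𝓝 (ff u v Bu Bv (p0.1 - ε') p0.2)) := by
      have hm : Tendsto (fun q : ℝ × ℝ => ((p0.1 - ε' : ℝ), q.2)) (𝓝[S'] q0)
          (𝓝[S] (p0.1 - ε', p0.2)) := by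
        rw [tendsto_nhdsWithin_iff]
        constructor
        · exact (tendsto_const_nhds.prodMk_nhds hsnd)
        · exact hev.mono (fun q hq => hq.1)
      exact Filter.Tendsto.comp ((continuousOn_ffc huv hBu hBv) (p0.1 - ε', p0.2) hmL) hm
    have hltR : ff u v Bu Bv p0.1 p0.2 < ff u v Bu Bv (p0.1 + ε') p0.2 :=
      ff_strictMono Bu Bv huv p0.2 (by linarith)
    have hltL : ff u v Bu Bv (p0.1 - ε') p0.2 < ff u v Bu Bv p0.1 p0.2 :=
      ff_strictMono Bu Bv huv p0.2 (by linarith)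
    have ev1 : ∀ᶠ q : ℝ × ℝ in 𝓝[S'] q0, q.1 < ff u v Bu Bv (p0.1 + ε') q.2 :=
      hfst.eventually_lt hcompR hltR
    have ev2 : ∀ᶠ q : ℝ × ℝ in 𝓝[S'] q0, ff u v Bu Bv (p0.1 - ε') q.2 < q.1 :=
      hcompL.eventually_lt hfst hltL
    have ev3 : ∀ᶠ q : ℝ × ℝ in 𝓝[S'] q0, q ∈ S' := eventually_mem_nhdsWithin
    filter_upwards [ev1, ev2, ev3] with q h1 h2 h3
    obtain ⟨p, hpS, rfl⟩ := h3
    have hq2 : (FF u v Bu Bv p).2 = p.2 := rfl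
    have hq1 : (FF u v Bu Bv p).1 = ff u v Bu Bv p.1 p.2 := rfl
    rw [hq1, hq2] at h1 h2
    have hp1 : Function.invFun (fun x => ff u v Bu Bv x (FF u v Bu Bv p).2)
        (FF u v Bu Bv p).1 = p.1 :=
      Function.leftInverse_invFun (ff_injective Bu Bv huv p.2) p.1
    rw [hp1]
    have hlt1 : p.1 < p0.1 + ε' := (ff_strictMono Bu Bv huv p.2).lt_iff_lt.mp h1
    have hlt2 : p0.1 - ε' < p.1 := (ff_strictMono Bu Bv huv p.2).lt_iff_lt.mp h2
    rw [Real.dist_eq, abs_lt]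
    constructor <;> linarith
  exact hmain.prodMk_nhds hsnd

lemma continuousOn_GG (huv : u < v) (hBu : IsOpen Bu) (hBv : IsOpen Bv) :
    ContinuousOn (GG u v Bu Bv) (FF u v Bu Bv '' Sset u v Bu Bv) := by
  rintro q0 ⟨p0, hp0S, rfl⟩
  apply GG_tendsto_aux huv hBu hBv hp0S
  intro ε hε
  have hq02 : (FF u v Bu Bv p0).2 = p0.2 := rfl
  rcases hp0S with (⟨-, ht0⟩ | ⟨hx0, ht0⟩) | ⟨hx0, ht0⟩
  · -- interior
    refine ⟨ε, hε, le_rfl, ⟨interior_subset_Sset ht0, interior_subset_Sset ht0⟩, ?_⟩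
    have hband : {q : ℝ × ℝ | u < q.2 ∧ q.2 < v} ∈ 𝓝 (FF u v Bu Bv p0) :=
      (isOpen_band u v).mem_nhds (by rw [mem_setOf_eq, hq02]; exact ⟨ht0.1, ht0.2⟩)
    apply eventually_of_mem (mem_nhdsWithin_of_mem_nhds hband)
    intro q hq
    exact ⟨interior_subset_Sset ⟨hq.1, hq.2⟩, interior_subset_Sset ⟨hq.1, hq.2⟩⟩
  · -- bottom
    rw [mem_singleton_iff] at ht0
    obtain ⟨δ, hδ0, hδ⟩ := exists_Ioo_subset hBu hx0
    set ε' := min ε (δ/2) with hε'def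
    have hε'0 : 0 < ε' := lt_min hε (by linarith)
    have hmemBu : ∀ z : ℝ, |z - p0.1| ≤ ε' → z ∈ Bu := by
      intro z hz
      apply hδ
      rw [abs_le] at hz
      have := min_le_right ε (δ/2)
      exact ⟨by linarith, by linarith⟩
    have hmem : ∀ t : ℝ, t ∈ Ico u v → ((p0.1 - ε', t) ∈ Sset u v Bu Bv ∧
        (p0.1 + ε', t) ∈ Sset u v Bu Bv) := by
      intro t ht
      rcases eq_or_lt_of_le ht.1 with h | h
      · constructor
        · exact Or.inl (Or.inr ⟨hmemBu _ (by rw [sub_sub_cancel_left, abs_neg,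
            abs_of_pos hε'0]), by rw [mem_singleton_iff, ← h]⟩)
        · exact Or.inl (Or.inr ⟨hmemBu _ (by rw [add_sub_cancel_left,
            abs_of_pos hε'0]), by rw [mem_singleton_iff, ← h]⟩)
      · exact ⟨interior_subset_Sset ⟨h, ht.2⟩, interior_subset_Sset ⟨h, ht.2⟩⟩
    refine ⟨ε', hε'0, min_le_left _ _, ?_, ?_⟩
    · rw [ht0]; exact hmem u ⟨le_rfl, huv⟩
    · have hlt : {q : ℝ × ℝ | q.2 < v} ∈ 𝓝 (FF u v Bu Bv p0) :=
        (isOpen_lt continuous_snd continuous_const).mem_nhds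
          (by rw [mem_setOf_eq, hq02, ht0]; exact huv)
      filter_upwards [mem_nhdsWithin_of_mem_nhds hlt, eventually_mem_nhdsWithin] with q h1 h2
      obtain ⟨p, hpS, rfl⟩ := h2
      have : (FF u v Bu Bv p).2 = p.2 := rfl
      rw [this] at h1 ⊢
      exact hmem p.2 ⟨(Sset_slab huv hpS).1, h1⟩
  · -- top
    rw [mem_singleton_iff] at ht0
    obtain ⟨δ, hδ0, hδ⟩ := exists_Ioo_subset hBv hx0
    set ε' := min ε (δ/2) with hε'def
    have hε'0 : 0 < ε' := lt_min hε (by linarith)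
    have hmemBv : ∀ z : ℝ, |z - p0.1| ≤ ε' → z ∈ Bv := by
      intro z hz
      apply hδ
      rw [abs_le] at hz
      have := min_le_right ε (δ/2)
      exact ⟨by linarith, by linarith⟩
    have hmem : ∀ t : ℝ, t ∈ Ioc u v → ((p0.1 - ε', t) ∈ Sset u v Bu Bv ∧
        (p0.1 + ε', t) ∈ Sset u v Bu Bv) := by
      intro t ht
      rcases eq_or_lt_of_le ht.2 with h | h
      · constructor
        · exact Or.inr ⟨hmemBv _ (by rw [sub_sub_cancel_left, abs_neg,
            abs_of_pos hε'0]), by rw [mem_singleton_iff, h]⟩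
        · exact Or.inr ⟨hmemBv _ (by rw [add_sub_cancel_left,
            abs_of_pos hε'0]), by rw [mem_singleton_iff, h]⟩
      · exact ⟨interior_subset_Sset ⟨ht.1, h⟩, interior_subset_Sset ⟨ht.1, h⟩⟩
    refine ⟨ε', hε'0, min_le_left _ _, ?_, ?_⟩
    · rw [ht0]; exact hmem v ⟨huv, le_rfl⟩
    · have hlt : {q : ℝ × ℝ | u < q.2} ∈ 𝓝 (FF u v Bu Bv p0) :=
        (isOpen_lt continuous_const continuous_snd).mem_nhds
          (by rw [mem_setOf_eq, hq02, ht0]; exact huv)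
      filter_upwards [mem_nhdsWithin_of_mem_nhds hlt, eventually_mem_nhdsWithin] with q h1 h2
      obtain ⟨p, hpS, rfl⟩ := h2
      have : (FF u v Bu Bv p).2 = p.2 := rfl
      rw [this] at h1 ⊢
      exact hmem p.2 ⟨h1, (Sset_slab huv hpS).2⟩

end Inv
/-! ### the image strip and its structure -/

section Image

variable {u v : ℝ} {Bu Bv : Set ℝ}

lemma FF_image_row (c : ℝ) (E : Set ℝ) :
    FF u v Bu Bv '' (E ×ˢ ({c} : Set ℝ)) =
      ((fun x => ff u v Bu Bv x c) '' E) ×ˢ ({c} : Set ℝ) := by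
  ext ⟨a, b⟩
  simp only [mem_image, mem_prod, mem_singleton_iff, FF, Prod.mk.injEq]
  constructor
  · rintro ⟨⟨x, t⟩, ⟨hx, rfl⟩, h1, rfl⟩
    exact ⟨⟨x, hx, h1⟩, rfl⟩
  · rintro ⟨⟨x, hx, h1⟩, rfl⟩
    exact ⟨(x, b), ⟨hx, rfl⟩, h1, rfl⟩

lemma FF_image (huv : u < v) :
    FF u v Bu Bv '' Sset u v Bu Bv = Sset u v (hB Bu '' Bu) (hB Bv '' Bv) := by
  ext q
  constructor
  · rintro ⟨p, hpS, rfl⟩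
    rcases hpS with (⟨-, ht⟩ | ⟨hx, ht⟩) | ⟨hx, ht⟩
    · exact interior_subset_Sset ht
    · rw [mem_singleton_iff] at ht
      left; right
      refine ⟨?_, by rw [mem_singleton_iff]; exact ht⟩
      show ff u v Bu Bv p.1 p.2 ∈ hB Bu '' Bu
      rw [ht, ff_at_u Bu Bv p.1]
      exact mem_image_of_mem _ hx
    · rw [mem_singleton_iff] at ht
      right
      refine ⟨?_, by rw [mem_singleton_iff]; exact ht⟩
      show ff u v Bu Bv p.1 p.2 ∈ hB Bv '' Bv
      rw [ht, ff_at_v Bu Bv huv p.1]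
      exact mem_image_of_mem _ hx
  · rintro ((⟨-, ht⟩ | ⟨hy, ht⟩) | ⟨hy, ht⟩)
    · obtain ⟨x, hx⟩ := ff_surjective Bu Bv huv ht q.1
      refine ⟨(x, q.2), interior_subset_Sset ht, ?_⟩
      have hx' : ff u v Bu Bv x q.2 = q.1 := hx
      unfold FF
      simp only
      rw [hx']
    · rw [mem_singleton_iff] at ht
      obtain ⟨x, hxB, hx⟩ := hy
      refine ⟨(x, u), Or.inl (Or.inr ⟨hxB, rfl⟩), ?_⟩
      unfold FF
      simp only
      rw [ff_at_u Bu Bv x, hx]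
      exact Prod.ext rfl ht.symm
    · rw [mem_singleton_iff] at ht
      obtain ⟨x, hxB, hx⟩ := hy
      refine ⟨(x, v), Or.inr ⟨hxB, rfl⟩, ?_⟩
      unfold FF
      simp only
      rw [ff_at_v Bu Bv huv x, hx]
      exact Prod.ext rfl ht.symm

lemma isStrip_Sset (huv : u < v) (hBu : IsOpen Bu) (hBv : IsOpen Bv) :
    IsStrip (Sset u v Bu Bv) u v := by
  refine ⟨huv, fun p hp => interior_subset_Sset hp.2, fun p hp => ⟨mem_univ _, Sset_slab huv hp⟩,
    univ ×ˢ Ioo u v ∪ Bu ×ˢ Iio v ∪ Bv ×ˢ Ioi u, ?_, ?_⟩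
  · exact ((isOpen_univ.prod isOpen_Ioo).union (hBu.prod isOpen_Iio)).union (hBv.prod isOpen_Ioi)
  · ext p
    constructor
    · rintro ((⟨-, ht⟩ | ⟨hx, ht⟩) | ⟨hx, ht⟩)
      · exact ⟨Or.inl (Or.inl ⟨mem_univ _, ht⟩), mem_univ _, Ioo_subset_Icc_self ht⟩
      · rw [mem_singleton_iff] at ht
        exact ⟨Or.inl (Or.inr ⟨hx, by rw [mem_Iio, ht]; exact huv⟩),
          mem_univ _, by rw [ht]; exact ⟨le_rfl, huv.le⟩⟩
      · rw [mem_singleton_iff] at ht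
        exact ⟨Or.inr ⟨hx, by rw [mem_Ioi, ht]; exact huv⟩,
          mem_univ _, by rw [ht]; exact ⟨huv.le, le_rfl⟩⟩
    · rintro ⟨(⟨-, ht⟩ | ⟨hx, ht⟩) | ⟨hx, ht⟩, -, hIcc⟩
      · exact interior_subset_Sset ht
      · rcases eq_or_lt_of_le hIcc.1 with h | h
        · exact Or.inl (Or.inr ⟨hx, by rw [mem_singleton_iff, ← h]⟩)
        · exact interior_subset_Sset ⟨h, ht⟩
      · rcases eq_or_lt_of_le hIcc.2 with h | h
        · exact Or.inr ⟨hx, by rw [mem_singleton_iff, h]⟩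
        · exact interior_subset_Sset ⟨ht, h⟩

lemma stripBd_Sset (huv : u < v) :
    stripBd (Sset u v Bu Bv) u v = Bu ×ˢ ({u} : Set ℝ) ∪ Bv ×ˢ ({v} : Set ℝ) := by
  ext p
  constructor
  · rintro ⟨(⟨-, ht⟩ | ⟨hx, ht⟩) | ⟨hx, ht⟩, hp2⟩
    · rcases hp2 with h | h
      · exact absurd ht.1 (by rw [h]; exact lt_irrefl u)
      · exact absurd ht.2 (by rw [h]; exact lt_irrefl v)
    · exact Or.inl ⟨hx, ht⟩
    · exact Or.inr ⟨hx, ht⟩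
  · rintro (⟨hx, ht⟩ | ⟨hx, ht⟩)
    · exact ⟨Or.inl (Or.inr ⟨hx, ht⟩), Or.inl ht⟩
    · exact ⟨Or.inr ⟨hx, ht⟩, Or.inr ht⟩

lemma section_Sset_int {t0 : ℝ} (ht0 : t0 ∈ Ioo u v) :
    {q : ℝ × ℝ | q.2 = t0} ∩ Sset u v Bu Bv = univ ×ˢ ({t0} : Set ℝ) := by
  ext q
  constructor
  · rintro ⟨hq, -⟩
    exact ⟨mem_univ _, hq⟩
  · rintro ⟨-, hq⟩
    rw [mem_singleton_iff] at hq
    exact ⟨hq, interior_subset_Sset (by rw [hq]; exact ht0)⟩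

lemma section_Sset_u (huv : u < v) :
    {q : ℝ × ℝ | q.2 = u} ∩ Sset u v Bu Bv = Bu ×ˢ ({u} : Set ℝ) := by
  ext q
  constructor
  · rintro ⟨hq, (⟨-, ht⟩ | ⟨hx, ht⟩) | ⟨hx, ht⟩⟩
    · exact absurd ht.1 (by rw [mem_setOf_eq] at hq; rw [hq]; exact lt_irrefl u)
    · exact ⟨hx, ht⟩
    · rw [mem_singleton_iff] at ht
      rw [mem_setOf_eq] at hq
      exact absurd (hq.symm.trans ht) (ne_of_lt huv)
  · rintro ⟨hx, ht⟩
    rw [mem_singleton_iff] at ht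
    exact ⟨ht, Or.inl (Or.inr ⟨hx, ht⟩)⟩

lemma section_Sset_v (huv : u < v) :
    {q : ℝ × ℝ | q.2 = v} ∩ Sset u v Bu Bv = Bv ×ˢ ({v} : Set ℝ) := by
  ext q
  constructor
  · rintro ⟨hq, (⟨-, ht⟩ | ⟨hx, ht⟩) | ⟨hx, ht⟩⟩
    · exact absurd ht.2 (by rw [mem_setOf_eq] at hq; rw [hq]; exact lt_irrefl v)
    · rw [mem_singleton_iff] at ht
      rw [mem_setOf_eq] at hq
      exact absurd (hq.symm.trans ht) (ne_of_gt huv)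
    · exact ⟨hx, ht⟩
  · rintro ⟨hx, ht⟩
    rw [mem_singleton_iff] at ht
    exact ⟨ht, Or.inr ⟨hx, ht⟩⟩

end Image
/-! ### the image is a model strip; leaves map to leaves -/

section Model

variable {u v : ℝ} {Bu Bv : Set ℝ}

lemma cc_row {E : Set ℝ} {c d : ℝ} (hcd : c ≠ d) {y0 : ℝ} (hy0 : y0 ∈ E) :
    connectedComponentIn (E ×ˢ ({c} : Set ℝ)) (y0, c) =
      (connectedComponentIn E y0) ×ˢ ({c} : Set ℝ) := by
  have h := cc_two_rows (E2 := (∅ : Set ℝ)) (v := d) hcd hy0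
  rwa [Set.empty_prod, union_empty] at h

lemma closure_prod_singleton {X : Set ℝ} {c : ℝ} :
    closure (X ×ˢ ({c} : Set ℝ)) = closure X ×ˢ ({c} : Set ℝ) := by
  rw [closure_prod_eq, closure_singleton]

lemma isModelStrip_image (huv : u < v) (hBu : IsOpen Bu) (hBv : IsOpen Bv) :
    IsModelStrip (Sset u v (hB Bu '' Bu) (hB Bv '' Bv)) u v := by
  have hBu' : IsOpen (hB Bu '' Bu) :=
    isOpen_image_of_strictMono hBu (hB_strictMono Bu) (continuousOn_hB Bu hBu)
  have hBv' : IsOpen (hB Bv '' Bv) :=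
    isOpen_image_of_strictMono hBv (hB_strictMono Bv) (continuousOn_hB Bv hBv)
  set Bu' := hB Bu '' Bu with hBu'def
  set Bv' := hB Bv '' Bv with hBv'def
  set W := Bu' ×ˢ ({u} : Set ℝ) ∪ Bv' ×ˢ ({v} : Set ℝ) with hWdef
  have hbd : stripBd (Sset u v Bu' Bv') u v = W := stripBd_Sset huv
  -- components of the boundary
  have hccu : ∀ y ∈ Bu', connectedComponentIn W (y, u) =
      (connectedComponentIn Bu' y) ×ˢ ({u} : Set ℝ) :=
    fun y hy => cc_two_rows (ne_of_lt huv) hy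
  have hccv : ∀ y ∈ Bv', connectedComponentIn W (y, v) =
      (connectedComponentIn Bv' y) ×ˢ ({v} : Set ℝ) := by
    intro y hy
    rw [hWdef, union_comm]
    exact cc_two_rows (ne_of_gt huv) hy
  have hccW : ∀ p ∈ W, ∃ (B : Set ℝ) (c x : ℝ), IsOpen B ∧ x ∈ B ∧ p = (hB B x, c) ∧
      connectedComponentIn W p =
        (hB B '' connectedComponentIn B x) ×ˢ ({c} : Set ℝ) ∧
        ((c = u ∧ B = Bu) ∨ (c = v ∧ B = Bv)) := by
    rintro ⟨y, t⟩ (⟨hy, ht⟩ | ⟨hy, ht⟩)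
    · rw [mem_singleton_iff] at ht
      obtain ⟨x, hxB, rfl⟩ := hy
      rw [eq_comm] at ht
      subst ht
      refine ⟨Bu, u, x, hBu, hxB, rfl, ?_, Or.inl ⟨rfl, rfl⟩⟩
      rw [hccu _ (mem_image_of_mem _ hxB),
        image_cc hBu (hB_strictMono Bu) (continuousOn_hB Bu hBu) hxB]
    · rw [mem_singleton_iff] at ht
      obtain ⟨x, hxB, rfl⟩ := hy
      rw [eq_comm] at ht
      subst ht
      refine ⟨Bv, v, x, hBv, hxB, rfl, ?_, Or.inr ⟨rfl, rfl⟩⟩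
      rw [hccv _ (mem_image_of_mem _ hxB),
        image_cc hBv (hB_strictMono Bv) (continuousOn_hB Bv hBv) hxB]
  refine ⟨isStrip_Sset huv hBu' hBv', ?_, ?_⟩
  · -- boundedness
    intro p hp
    rw [hbd] at hp ⊢
    obtain ⟨B, c, x, hBo, hxB, rfl, hcc, -⟩ := hccW p hp
    rw [hcc]
    apply Bornology.IsBounded.subset
      ((Metric.isBounded_Icc (-(CB B)) (CB B)).prod (Metric.isBounded_Icc c c))
    apply Set.prod_mono
    · rintro z ⟨w, -, rfl⟩
      exact abs_le.mp (hB_abs_le B w)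
    · rw [Icc_self]
  · -- disjoint closures
    intro p hp q hq hne
    rw [hbd] at hp hq hne ⊢
    obtain ⟨B1, c1, x1, hBo1, hxB1, rfl, hcc1, hc1⟩ := hccW p hp
    obtain ⟨B2, c2, x2, hBo2, hxB2, rfl, hcc2, hc2⟩ := hccW q hq
    rw [hcc1, hcc2] at hne ⊢
    rw [closure_prod_singleton, closure_prod_singleton, prod_inter_prod]
    by_cases hc : c1 = c2
    · -- same row; in that case B1 = B2 by construction
      subst hc
      have hBB : B1 = B2 := by
        rcases hc1 with ⟨h, hB1⟩ | ⟨h, hB1⟩ <;> rcases hc2 with ⟨h', hB2⟩ | ⟨h', hB2⟩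
        · rw [hB1, hB2]
        · exact absurd (h.symm.trans h') (ne_of_lt huv)
        · exact absurd (h'.symm.trans h) (ne_of_lt huv)
        · rw [hB1, hB2]
      subst hBB
      have hneI : connectedComponentIn B1 x1 ≠ connectedComponentIn B1 x2 := by
        intro hI
        exact hne (by rw [hI])
      rw [closure_image_cc_disjoint hBo1 hxB1 hxB2 hneI, Set.empty_prod]
    · -- different rows
      have : ({c1} : Set ℝ) ∩ {c2} = ∅ := by
        ext z
        simp only [mem_inter_iff, mem_singleton_iff, mem_empty_iff_false, iff_false, not_and]
        rintro rfl
        exact hc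
      rw [this, prod_empty]

end Model
/-! ### leaves map to leaves; decomposition of an arbitrary strip -/

section Leaves

variable {u v : ℝ} {Bu Bv : Set ℝ}

lemma leaf_map (huv : u < v) (hBu : IsOpen Bu) (hBv : IsOpen Bv) :
    ∀ L, IsLeaf (Sset u v Bu Bv) L →
      IsLeaf (Sset u v (hB Bu '' Bu) (hB Bv '' Bv)) (FF u v Bu Bv '' L) := by
  rintro L ⟨p, hpS, rfl⟩
  obtain ⟨x0, t0⟩ := p
  rcases hpS with (⟨-, ht⟩ | ⟨hx, ht⟩) | ⟨hx, ht⟩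
  · -- interior leaf
    have ht' : t0 ∈ Ioo u v := ht
    refine ⟨(0, t0), interior_subset_Sset ht', ?_⟩
    rw [show {q : ℝ × ℝ | q.2 = ((x0, t0) : ℝ × ℝ).2} ∩ Sset u v Bu Bv =
        univ ×ˢ ({t0} : Set ℝ) from section_Sset_int ht']
    rw [show {q : ℝ × ℝ | q.2 = (((0 : ℝ), t0) : ℝ × ℝ).2} ∩
        Sset u v (hB Bu '' Bu) (hB Bv '' Bv) = univ ×ˢ ({t0} : Set ℝ) from
        section_Sset_int ht']
    rw [cc_row (ne_of_lt ht'.2) (mem_univ x0), cc_row (ne_of_lt ht'.2) (mem_univ (0 : ℝ)),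
      connectedComponentIn_univ, PreconnectedSpace.connectedComponent_eq_univ]
    rw [FF_image_row, Set.image_univ,
      Set.range_eq_univ.mpr (ff_surjective Bu Bv huv ht')]
    simp [connectedComponentIn_univ, PreconnectedSpace.connectedComponent_eq_univ]
  · -- bottom leaf
    rw [mem_singleton_iff, eq_comm] at ht
    subst ht
    refine ⟨(hB Bu x0, u), Or.inl (Or.inr ⟨mem_image_of_mem _ hx, rfl⟩), ?_⟩
    rw [show {q : ℝ × ℝ | q.2 = ((x0, u) : ℝ × ℝ).2} ∩ Sset u v Bu Bv =
        Bu ×ˢ ({u} : Set ℝ) from section_Sset_u huv]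
    rw [show {q : ℝ × ℝ | q.2 = ((hB Bu x0, u) : ℝ × ℝ).2} ∩
        Sset u v (hB Bu '' Bu) (hB Bv '' Bv) = (hB Bu '' Bu) ×ˢ ({u} : Set ℝ) from
        section_Sset_u huv]
    rw [cc_row (ne_of_lt huv) hx, cc_row (ne_of_lt huv) (mem_image_of_mem _ hx),
      ← image_cc hBu (hB_strictMono Bu) (continuousOn_hB Bu hBu) hx]
    rw [FF_image_row]
    congr 1
    exact image_congr (fun x _ => ff_at_u Bu Bv x)
  · -- top leaf
    rw [mem_singleton_iff, eq_comm] at ht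
    subst ht
    refine ⟨(hB Bv x0, v), Or.inr ⟨mem_image_of_mem _ hx, rfl⟩, ?_⟩
    rw [show {q : ℝ × ℝ | q.2 = ((x0, v) : ℝ × ℝ).2} ∩ Sset u v Bu Bv =
        Bv ×ˢ ({v} : Set ℝ) from section_Sset_v huv]
    rw [show {q : ℝ × ℝ | q.2 = ((hB Bv x0, v) : ℝ × ℝ).2} ∩
        Sset u v (hB Bu '' Bu) (hB Bv '' Bv) = (hB Bv '' Bv) ×ˢ ({v} : Set ℝ) from
        section_Sset_v huv]
    rw [cc_row (ne_of_gt huv) hx, cc_row (ne_of_gt huv) (mem_image_of_mem _ hx),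
      ← image_cc hBv (hB_strictMono Bv) (continuousOn_hB Bv hBv) hx]
    rw [FF_image_row]
    congr 1
    exact image_congr (fun x _ => ff_at_v Bu Bv huv x)

lemma strip_eq_Sset {S : Set (ℝ × ℝ)} {u v : ℝ} (hS : IsStrip S u v) :
    ∃ Bu Bv : Set ℝ, IsOpen Bu ∧ IsOpen Bv ∧ S = Sset u v Bu Bv := by
  obtain ⟨huv, hsub1, hsub2, U, hU, hSU⟩ := hS
  refine ⟨(fun x => ((x : ℝ), u)) ⁻¹' U, (fun x => ((x : ℝ), v)) ⁻¹' U,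
    hU.preimage (continuous_id.prodMk continuous_const),
    hU.preimage (continuous_id.prodMk continuous_const), ?_⟩
  ext p
  constructor
  · intro hp
    have hIcc : p.2 ∈ Icc u v := (hsub2 hp).2
    rcases eq_or_lt_of_le hIcc.1 with h | h
    · left; right
      refine ⟨?_, by rw [mem_singleton_iff, ← h]⟩
      show (p.1, u) ∈ U
      have hpU : p ∈ U := (hSU ▸ hp).1
      have : (p.1, u) = p := Prod.ext rfl h
      rw [this]
      exact hpU
    rcases eq_or_lt_of_le hIcc.2 with h' | h'
    · right
      refine ⟨?_, by rw [mem_singleton_iff, h']⟩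
      show (p.1, v) ∈ U
      have hpU : p ∈ U := (hSU ▸ hp).1
      have : (p.1, v) = p := Prod.ext rfl h'.symm
      rw [this]
      exact hpU
    · exact interior_subset_Sset ⟨h, h'⟩
  · rintro ((⟨-, ht⟩ | ⟨hx, ht⟩) | ⟨hx, ht⟩)
    · exact hsub1 ⟨mem_univ _, ht⟩
    · rw [mem_singleton_iff] at ht
      rw [hSU]
      refine ⟨?_, mem_univ _, by rw [ht]; exact ⟨le_rfl, huv.le⟩⟩
      have : p = (p.1, u) := Prod.ext rfl ht
      rw [this]
      exact hx
    · rw [mem_singleton_iff] at ht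
      rw [hSU]
      refine ⟨?_, mem_univ _, by rw [ht]; exact ⟨huv.le, le_rfl⟩⟩
      have : p = (p.1, v) := Prod.ext rfl ht
      rw [this]
      exact hx

end Leaves
end Stmt5

/-- every strip is foliated homeomorphic to a model strip. -/
theorem stmt_5 (S : Set (ℝ × ℝ)) (u v : ℝ) (hS : IsStrip S u v) :
    ∃ (S' : Set (ℝ × ℝ)) (u' v' : ℝ) (F : ℝ × ℝ → ℝ × ℝ),
      IsModelStrip S' u' v' ∧ FoliatedHomeo S S' F := by
  have huv : u < v := hS.1
  obtain ⟨Bu, Bv, hBu, hBv, hSeq⟩ := Stmt5.strip_eq_Sset hS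
  subst hSeq
  refine ⟨Stmt5.Sset u v (Stmt5.hB Bu '' Bu) (Stmt5.hB Bv '' Bv), u, v,
    Stmt5.FF u v Bu Bv, Stmt5.isModelStrip_image huv hBu hBv, ?_, ?_, ?_, ?_⟩
  · -- BijOn
    refine ⟨?_, ?_, ?_⟩
    · intro p hp
      rw [← Stmt5.FF_image huv]
      exact mem_image_of_mem _ hp
    · intro p hp q hq h
      obtain ⟨h1, h2⟩ := Prod.ext_iff.mp h
      have h2 : p.2 = q.2 := h2
      have h1 : Stmt5.ff u v Bu Bv p.1 p.2 = Stmt5.ff u v Bu Bv q.1 q.2 := h1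
      rw [h2] at h1
      exact Prod.ext (Stmt5.ff_injective Bu Bv huv q.2 h1) h2
    · rw [← Stmt5.FF_image huv]
      exact Subset.rfl
  · -- continuity
    exact Stmt5.continuousOn_FF huv hBu hBv
  · -- inverse
    refine ⟨Stmt5.GG u v Bu Bv, ⟨fun p _ => Stmt5.GG_FF huv Bu Bv p, ?_⟩, ?_⟩
    · intro q hq
      rw [← Stmt5.FF_image huv] at hq
      obtain ⟨p, hp, rfl⟩ := hq
      rw [Stmt5.GG_FF huv Bu Bv p]
    · rw [← Stmt5.FF_image huv]
      exact Stmt5.continuousOn_GG huv hBu hBv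
  · -- leaves
    exact Stmt5.leaf_map huv hBu hBv
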